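/- If f ∈ L²(T^{E₁}) (product Haar measure) is such that f ∘ Φ equals, as an element of L²(T^{E₂}), a character function χ_m for some m : E₂ → ℤ, then f itself equals (in L²) a character function χ_n for some n : E₁ → ℤ, up to a scalar of modulus one; more precisely there exist n : E₁ → ℤ and c ∈ ℂ with |c| = 1 such that f = c·χ_n in L²(T^{E₁}). -/

import Mathlib

open MeasureTheory

attribute [local instance] ZeroLEOneClass.factZeroLtOne

/-- The character function `χ_n(A) = ∏_e exp(2πi n(e) A(e))` on `T^E`, `T = ℝ/ℤ`. -/
noncomputable def chi {E : Type*} [Fintype E] (n : E → ℤ) (A : E → UnitAddCircle) : ℂ :=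
  ∏ e, fourier (n e) (A e)

/-- The additive path map `Φ(A)(e) = Σ_i σ_i A(f_i)` where `p e = [(f₁,σ₁),…,(f_n,σ_n)]`
and `true` stands for the sign `+1`. -/
def pathMapAdd {E₁ E₂ M : Type*} [AddCommGroup M] (p : E₁ → List (E₂ × Bool)) (A : E₂ → M) :
    E₁ → M :=
  fun e => ((p e).map fun q => if q.2 then A q.1 else -A q.1).sum

instance : IsProbabilityMeasure (volume : Measure UnitAddCircle) :=
  ⟨UnitAddCircle.measure_univ⟩

lemma fourier_pt_add (n : ℤ) (x y : UnitAddCircle) :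
    (fourier n (x + y) : ℂ) = fourier n x * fourier n y := by
  simp [fourier_apply, smul_add, AddCircle.toCircle_add]

lemma fourier_pt_neg (n : ℤ) (x : UnitAddCircle) :
    (fourier n (-x) : ℂ) = fourier (-n) x := by
  rw [fourier_apply, fourier_apply, smul_neg, neg_smul]

lemma norm_fourier' (n : ℤ) (x : UnitAddCircle) : ‖(fourier n x : ℂ)‖ = 1 := by
  simp [fourier_apply, Circle.norm_coe]

lemma chi_add {E : Type*} [Fintype E] (n : E → ℤ) (X Y : E → UnitAddCircle) :
    chi n (X + Y) = chi n X * chi n Y := by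
  unfold chi
  rw [← Finset.prod_mul_distrib]
  exact Finset.prod_congr rfl fun e _ => fourier_pt_add _ _ _

lemma norm_chi {E : Type*} [Fintype E] (n : E → ℤ) (A : E → UnitAddCircle) :
    ‖chi n A‖ = 1 := by
  unfold chi
  rw [norm_prod]
  exact Finset.prod_eq_one fun e _ => norm_fourier' _ _

lemma pathMapAdd_add {E₁ E₂ M : Type*} [AddCommGroup M] (p : E₁ → List (E₂ × Bool))
    (X Y : E₂ → M) : pathMapAdd p (X + Y) = pathMapAdd p X + pathMapAdd p Y := by
  funext e
  simp only [Pi.add_apply, pathMapAdd]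
  induction p e with
  | nil => simp
  | cons q l ih =>
    simp only [List.map_cons, List.sum_cons, ih]
    have : (if q.2 then X q.1 + Y q.1 else -(X q.1 + Y q.1))
        = (if q.2 then X q.1 else -X q.1) + (if q.2 then Y q.1 else -Y q.1) := by
      by_cases hq : q.2 <;> simp [hq, Pi.add_apply] <;> abel
    rw [this]; abel

/-- If `f ∈ L²(T^{E₁})` is such that `f ∘ Φ` equals a character `χ_m` almost everywhere,
then `f` itself equals `c·χ_n` almost everywhere for some `n` and some scalar `c`
of modulus one. -/
theorem stmt14 {E₁ E₂ : Type*} [Fintype E₁] [Fintype E₂]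
    (p : E₁ → List (E₂ × Bool))
    (hne : ∀ e, p e ≠ [])
    (hnodup : ∀ e, ((p e).map Prod.fst).Nodup)
    (hdisj : ∀ e e', e ≠ e' → ∀ f, f ∈ (p e).map Prod.fst → f ∉ (p e').map Prod.fst)
    (f : (E₁ → UnitAddCircle) → ℂ)
    (hf : MemLp f 2 (Measure.pi fun _ : E₁ => (volume : Measure UnitAddCircle)))
    (m : E₂ → ℤ)
    (h : f ∘ pathMapAdd p
      =ᵐ[Measure.pi fun _ : E₂ => (volume : Measure UnitAddCircle)] chi m) :
    ∃ (n : E₁ → ℤ) (c : ℂ), ‖c‖ = 1 ∧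
      f =ᵐ[Measure.pi fun _ : E₁ => (volume : Measure UnitAddCircle)]
        fun A => c * chi n A := by
  classical
  set μ₁ := Measure.pi fun _ : E₁ => (volume : Measure UnitAddCircle) with hμ₁
  set μ₂ := Measure.pi fun _ : E₂ => (volume : Measure UnitAddCircle) with hμ₂
  -- heads
  set h1 : E₁ → E₂ := fun e => ((p e).head (hne e)).1 with hh1
  set s1 : E₁ → Bool := fun e => ((p e).head (hne e)).2 with hs1
  have hhead_mem : ∀ e, h1 e ∈ (p e).map Prod.fst := fun e =>
    List.mem_map_of_mem (List.head_mem (hne e))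
  have hinj : Function.Injective h1 := by
    intro e e' hee
    by_contra hne'
    exact hdisj e e' hne' (h1 e) (hhead_mem e) (hee ▸ hhead_mem e')
  set inF : E₂ → Prop := fun g => ∃ e, h1 e = g with hinF
  set eqv : E₁ ≃ {g // inF g} :=
    (Equiv.ofInjective h1 hinj).trans (Equiv.subtypeEquivRight (fun g => by
      simp [hinF, Set.mem_range])) with heqv
  have heqv_apply : ∀ e, (eqv e : E₂) = h1 e := fun e => rfl
  have heqv_symm : ∀ (e : E₁) (hg : inF (h1 e)), eqv.symm ⟨h1 e, hg⟩ = e := by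
    intro e hg
    rw [Equiv.symm_apply_eq]
    exact Subtype.ext rfl
  -- measures on the two factor spaces
  set μF := Measure.pi fun _ : {g // inF g} => (volume : Measure UnitAddCircle) with hμF
  set μG := Measure.pi fun _ : {g // ¬ inF g} => (volume : Measure UnitAddCircle) with hμG
  set P := MeasurableEquiv.piEquivPiSubtypeProd (fun _ : E₂ => UnitAddCircle) inF with hP
  have hPmp : MeasurePreserving P μ₂ (μF.prod μG) :=
    measurePreserving_piEquivPiSubtypeProd (fun _ : E₂ => volume) inF
  set q : ({g // ¬ inF g} → UnitAddCircle) × ({g // inF g} → UnitAddCircle) →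
      (E₂ → UnitAddCircle) := fun z => P.symm z.swap with hq
  have hqmp : MeasurePreserving q (μG.prod μF) μ₂ :=
    (hPmp.symm P).comp Measure.measurePreserving_swap
  have h2 : (f ∘ pathMapAdd p) ∘ q =ᵐ[μG.prod μF] chi m ∘ q :=
    hqmp.quasiMeasurePreserving.ae_eq_comp h
  have h3 : ∀ᵐ y ∂μG, ∀ᵐ x ∂μF,
      f (pathMapAdd p (P.symm (x, y))) = chi m (P.symm (x, y)) := by
    have := Measure.ae_ae_of_ae_prod h2
    filter_upwards [this] with y hy
    filter_upwards [hy] with x hx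
    exact hx
  obtain ⟨y₀, hy₀⟩ := h3.exists
  -- the reindexing/sign map Θ
  set Θ : (E₁ → UnitAddCircle) → ({g // inF g} → UnitAddCircle) :=
    fun B g => if s1 (eqv.symm g) then B (eqv.symm g) else -B (eqv.symm g) with hΘ
  have hΘmp : MeasurePreserving Θ μ₁ μF := by
    have hfe : (fun (B : E₁ → UnitAddCircle) (g : {g // inF g}) => B (eqv.symm g))
        = ⇑(MeasurableEquiv.piCongrLeft (fun _ : {g // inF g} => UnitAddCircle) eqv) := by
      funext B g
      obtain ⟨e, rfl⟩ : ∃ e, eqv e = g := ⟨eqv.symm g, eqv.apply_symm_apply g⟩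
      rw [Equiv.symm_apply_apply]
      exact (MeasurableEquiv.piCongrLeft_apply_apply (β := fun _ : {g // inF g} => UnitAddCircle) eqv B e).symm
    have h1mp : MeasurePreserving
        (fun (B : E₁ → UnitAddCircle) (g : {g // inF g}) => B (eqv.symm g)) μ₁ μF := by
      rw [hfe]
      exact measurePreserving_piCongrLeft (fun _ : {g // inF g} => volume) eqv
    have h2mp : MeasurePreserving
        (fun (C : {g // inF g} → UnitAddCircle) (g : {g // inF g}) =>
          if s1 (eqv.symm g) then C g else -C g) μF μF := by
      refine measurePreserving_pi (fun _ => volume) (fun _ => volume)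
        (f := fun (g : {g // inF g}) (x : UnitAddCircle) =>
          if s1 (eqv.symm g) then x else -x) fun g => ?_
      by_cases hg : s1 (eqv.symm g)
      · simp only [hg, ↓reduceIte]; exact MeasurePreserving.id _
      · simpa [hg] using Measure.measurePreserving_neg (volume : Measure UnitAddCircle)
    exact h2mp.comp h1mp
  have h4 : (fun B => f (pathMapAdd p (P.symm (Θ B, y₀))))
      =ᵐ[μ₁] (fun B => chi m (P.symm (Θ B, y₀))) :=
    Measure.QuasiMeasurePreserving.ae_eq_comp hΘmp.quasiMeasurePreserving
      (hy₀ : (fun x => f (pathMapAdd p (P.symm (x, y₀))))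
        =ᵐ[μF] fun x => chi m (P.symm (x, y₀)))
  -- split the argument into two pieces
  set SB : (E₁ → UnitAddCircle) → (E₂ → UnitAddCircle) :=
    fun B g => if hg : inF g then Θ B ⟨g, hg⟩ else 0 with hSBdef
  set A₀ : E₂ → UnitAddCircle := fun g => if hg : inF g then 0 else y₀ ⟨g, hg⟩ with hA₀
  have hPsa : ∀ (x : {g // inF g} → UnitAddCircle) (y : {g // ¬ inF g} → UnitAddCircle)
      (g : E₂), P.symm (x, y) g = if hg : inF g then x ⟨g, hg⟩ else y ⟨g, hg⟩ :=
    fun x y g => rfl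
  have hsplit : ∀ B, P.symm (Θ B, y₀) = SB B + A₀ := by
    intro B; funext g
    rw [hPsa]
    by_cases hg : inF g <;> simp [hSBdef, hA₀, hg]
  -- tail elements of each list are not heads
  have htail_notF : ∀ e q, q ∈ (p e).tail → ¬ inF q.1 := by
    intro e qq hq hg
    obtain ⟨e', he'⟩ := hg
    have hqmem : (qq.1 : E₂) ∈ (p e).map Prod.fst :=
      List.mem_map_of_mem (List.mem_of_mem_tail hq)
    by_cases hee : e' = e
    · subst hee
      have hcons : (p e').map Prod.fst = h1 e' :: ((p e').tail.map Prod.fst) := by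
        conv_lhs => rw [← List.cons_head_tail (hne e')]
        rw [List.map_cons]
      have hnd := hnodup e'
      rw [hcons] at hnd
      have hmem : qq.1 ∈ (p e').tail.map Prod.fst := List.mem_map_of_mem hq
      rw [← he'] at hmem
      exact (List.nodup_cons.mp hnd).1 hmem
    · exact hdisj e' e hee (h1 e') (hhead_mem e') (he' ▸ hqmem)
  have hSBh : ∀ B e, SB B (h1 e) = if s1 e then B e else -B e := by
    intro B e
    have hF : inF (h1 e) := ⟨e, rfl⟩
    show (if hg : inF (h1 e) then Θ B ⟨h1 e, hg⟩ else 0) = _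
    rw [dif_pos hF]
    show (if s1 (eqv.symm ⟨h1 e, hF⟩) then B (eqv.symm ⟨h1 e, hF⟩)
      else -B (eqv.symm ⟨h1 e, hF⟩)) = _
    rw [heqv_symm e hF]
  have hSB0 : ∀ B g, ¬ inF g → SB B g = 0 := fun B g hg => dif_neg hg
  have hpathS : ∀ B, pathMapAdd p (SB B) = B := by
    intro B; funext e
    show ((p e).map fun q => if q.2 then SB B q.1 else -SB B q.1).sum = B e
    have hcons : p e = (p e).head (hne e) :: (p e).tail := (List.cons_head_tail _).symm
    conv_lhs => rw [hcons]
    rw [List.map_cons, List.sum_cons]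
    have htailzero : (((p e).tail).map fun q => if q.2 then SB B q.1 else -SB B q.1).sum = 0 := by
      apply List.sum_eq_zero
      intro x hx
      obtain ⟨qq, hq, rfl⟩ := List.mem_map.mp hx
      rw [hSB0 B qq.1 (htail_notF e qq hq)]
      by_cases hb : qq.2 <;> simp [hb]
    have hheadterm : (if ((p e).head (hne e)).2 then SB B (((p e).head (hne e)).1)
        else -SB B (((p e).head (hne e)).1)) = B e := by
      show (if s1 e then SB B (h1 e) else -SB B (h1 e)) = B e
      rw [hSBh B e]
      by_cases hb : s1 e <;> simp [hb]
    rw [htailzero, hheadterm, add_zero]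
  set n : E₁ → ℤ := fun e => if s1 e then m (h1 e) else -(m (h1 e)) with hn
  have hchiS : ∀ B, chi m (SB B) = chi n B := by
    intro B
    unfold chi
    rw [← Finset.prod_subset (Finset.subset_univ (Finset.univ.image h1)) ?_]
    · rw [Finset.prod_image fun a _ b _ hab => hinj hab]
      apply Finset.prod_congr rfl
      intro e _
      rw [hSBh B e]
      show _ = (fourier (if s1 e then m (h1 e) else -(m (h1 e))) (B e) : ℂ)
      by_cases hb : s1 e
      · simp [hb]
      · simp only [hb, if_false, Bool.false_eq_true]
        rw [fourier_pt_neg]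
    · intro g _ hg
      have hgF : ¬ inF g := by
        rintro ⟨e, rfl⟩
        exact hg (Finset.mem_image_of_mem h1 (Finset.mem_univ e))
      rw [hSB0 B g hgF, fourier_eval_zero]
  set t : E₁ → UnitAddCircle := pathMapAdd p A₀ with ht
  set c₀ : ℂ := chi m A₀ with hc₀
  have h5 : (fun B => f (B + t)) =ᵐ[μ₁] fun B => chi n B * c₀ := by
    filter_upwards [h4] with B hB
    rw [hsplit B, pathMapAdd_add, hpathS B, chi_add, hchiS B] at hB
    exact hB
  have hτ : MeasurePreserving (fun B : E₁ → UnitAddCircle => B - t) μ₁ μ₁ := by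
    refine measurePreserving_pi (fun _ : E₁ => volume) (fun _ : E₁ => volume)
      (f := fun e x => x - t e) fun e => ?_
    simpa [sub_eq_add_neg] using measurePreserving_add_right (volume : Measure UnitAddCircle) (-t e)
  have h6 : f =ᵐ[μ₁] fun B => (chi n (fun e => -t e) * c₀) * chi n B := by
    have hcomp := Measure.QuasiMeasurePreserving.ae_eq_comp hτ.quasiMeasurePreserving h5
    filter_upwards [hcomp] with B hB
    simp only [Function.comp] at hB
    rw [sub_add_cancel] at hB
    have h8 : chi n (B - t) = chi n B * chi n (fun e => -t e) := by
      have hbt : B - t = B + fun e => -t e := by funext e; simp [sub_eq_add_neg]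
      rw [hbt, chi_add]
    rw [h8] at hB
    rw [hB]; ring
  exact ⟨n, chi n (fun e => -t e) * c₀, by rw [norm_mul, norm_chi, hc₀, norm_chi, one_mul], h6⟩
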